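/- Let W = ℤ_{≤3} ∪ ⋃_{k≥1} [((k-1)(k+2))/2 + 2^{k+1}, ((k-1)(k+2))/2 + 2^{k+1} + k]. Then every asymptotic complement to W in ℤ contains at least three elements. -/

import Mathlib

open Pointwise

def IsAddAsympCompl (W C : Set ℤ) : Prop :=
  C.Nonempty ∧ ((Set.univ : Set ℤ) \ (W + C)).Finite

def blockStart (k : ℕ) : ℤ := ((k : ℤ) - 1) * ((k : ℤ) + 2) / 2 + 2 ^ (k + 1)

lemma bs_even (k : ℕ) : 2 * (((k:ℤ) - 1) * ((k:ℤ) + 2) / 2) = ((k:ℤ) - 1) * ((k:ℤ) + 2) := by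
  apply Int.two_mul_ediv_two_of_even
  have h : ((k:ℤ) - 1) * ((k:ℤ) + 2) = (k:ℤ) * ((k:ℤ) + 1) - 2 := by ring
  rw [h]
  exact (Int.even_mul_succ_self (k:ℤ)).sub (by decide)

lemma bs_rec (k : ℕ) : blockStart (k+1) = blockStart k + k + 2^(k+1) + 1 := by
  have h1 := bs_even k
  have h2 := bs_even (k+1)
  unfold blockStart
  push_cast at h1 h2 ⊢
  have hp : (2:ℤ)^(k+1+1) = 2 * 2^(k+1) := by ring
  ring_nf at h1 h2 ⊢
  nlinarith [h1, h2, hp]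

lemma bs_add_mono : Monotone (fun k : ℕ => blockStart k + k) := by
  apply monotone_nat_of_le_succ
  intro k
  have h := bs_rec k
  have hp : (0:ℤ) ≤ 2^(k+1) := by positivity
  push_cast
  push_cast at h
  linarith

lemma bs_mono : Monotone blockStart := by
  apply monotone_nat_of_le_succ
  intro k
  have h := bs_rec k
  have hp : (0:ℤ) ≤ 2^(k+1) := by positivity
  have hk : (0:ℤ) ≤ (k:ℤ) := by positivity
  linarith

lemma bs_one : blockStart 1 = 4 := by
  unfold blockStart
  norm_num

lemma bs_ge {k : ℕ} (hk : 1 ≤ k) : 5 ≤ blockStart k + k := by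
  have := bs_add_mono hk
  simp only at this
  rw [bs_one] at this
  push_cast at this
  linarith

lemma not_mem_gap (W : Set ℤ)
    (hW : W = {n : ℤ | n ≤ 3} ∪
      ⋃ k ∈ {k : ℕ | 1 ≤ k}, Set.Icc (blockStart k) (blockStart k + k))
    {k : ℕ} (hk : 1 ≤ k) {m : ℤ}
    (h1 : blockStart k + k < m) (h2 : m < blockStart (k+1)) : m ∉ W := by
  have h5 := bs_ge hk
  rw [hW]
  rintro (h | h)
  · simp only [Set.mem_setOf_eq] at h
    linarith
  · simp only [Set.mem_iUnion, Set.mem_Icc, Set.mem_setOf_eq] at h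
    obtain ⟨j, hj1, hjl, hju⟩ := h
    rcases le_or_gt j k with hjk | hjk
    · have := bs_add_mono hjk
      simp only at this
      linarith
    · have hk1 : k + 1 ≤ j := hjk
      have := bs_mono hk1
      linarith

theorem stmt_14 (W : Set ℤ)
    (hW : W = {n : ℤ | n ≤ 3} ∪
      ⋃ k ∈ {k : ℕ | 1 ≤ k}, Set.Icc (blockStart k) (blockStart k + k))
    (C : Set ℤ) (hC : IsAddAsympCompl W C) :
    ∃ a ∈ C, ∃ b ∈ C, ∃ c ∈ C, a < b ∧ b < c := by
  obtain ⟨hne, hfin⟩ := hC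
  by_contra h
  push_neg at h
  -- C is contained in a two-element set {a, b}
  obtain ⟨a0, ha0⟩ := hne
  have hpair : ∃ a b : ℤ, a ≤ b ∧ a ∈ C ∧ ∀ x ∈ C, x = a ∨ x = b := by
    by_cases hx : ∃ x ∈ C, x ≠ a0
    · obtain ⟨b0, hb0, hbne⟩ := hx
      rcases le_total a0 b0 with hle | hle
      · refine ⟨a0, b0, hle, ha0, ?_⟩
        intro x hxC
        by_contra hxx
        push_neg at hxx
        have hlt : a0 < b0 := hle.lt_of_ne hbne.symm
        rcases lt_trichotomy x a0 with h1 | h1 | h1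
        · exact absurd hlt (not_lt.mpr (h x hxC a0 ha0 b0 hb0 h1))
        · exact hxx.1 h1
        · rcases lt_trichotomy x b0 with h2 | h2 | h2
          · exact absurd h2 (not_lt.mpr (h a0 ha0 x hxC b0 hb0 h1))
          · exact hxx.2 h2
          · exact absurd h2 (not_lt.mpr (h a0 ha0 b0 hb0 x hxC hlt))
      · refine ⟨b0, a0, hle, hb0, ?_⟩
        intro x hxC
        by_contra hxx
        push_neg at hxx
        have hlt : b0 < a0 := hle.lt_of_ne hbne
        rcases lt_trichotomy x b0 with h1 | h1 | h1
        · exact absurd hlt (not_lt.mpr (h x hxC b0 hb0 a0 ha0 h1))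
        · exact hxx.1 h1
        · rcases lt_trichotomy x a0 with h2 | h2 | h2
          · exact absurd h2 (not_lt.mpr (h b0 hb0 x hxC a0 ha0 h1))
          · exact hxx.2 h2
          · exact absurd h2 (not_lt.mpr (h b0 hb0 a0 ha0 x hxC hlt))
    · push_neg at hx
      exact ⟨a0, a0, le_refl _, ha0, fun x hxC => Or.inl (hx x hxC)⟩
  obtain ⟨a, b, hab, _, hsub⟩ := hpair
  -- Build infinitely many integers outside W + C
  set K : ℕ := (b - a).toNat + 1 with hK
  have hKba : b - a < (K : ℤ) := by
    have := Int.self_le_toNat (b - a)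
    push_cast [hK]
    linarith
  set f : ℕ → ℤ := fun i => blockStart (K + i) + (K + i) + b + 1 with hf
  have hfmem : ∀ i, f i ∈ (Set.univ : Set ℤ) \ (W + C) := by
    intro i
    refine ⟨Set.mem_univ _, ?_⟩
    intro hmem
    rw [Set.mem_add] at hmem
    obtain ⟨w, hw, c, hc, hwc⟩ := hmem
    set k := K + i with hk
    have hk1 : 1 ≤ k := by omega
    have hKk : (K : ℤ) ≤ (k : ℤ) := by exact_mod_cast Nat.le_add_right K i
    have hpow : (k : ℤ) + 1 < 2 ^ (k + 1) := by
      have := Nat.lt_two_pow_self (n := k + 1)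
      exact_mod_cast this
    have hrec := bs_rec k
    have hw' : w = blockStart k + (k : ℤ) + b + 1 - c := by
      have : f i = blockStart k + (k : ℤ) + b + 1 := by simp [hf, hk]
      omega
    rcases hsub c hc with rfl | rfl
    · -- c = a : w = blockStart k + k + 1 + (b - a)
      have hlow : blockStart k + k < w := by
        rw [hw']; linarith
      have hhigh : w < blockStart (k + 1) := by
        rw [hw', hrec]
        linarith
      exact not_mem_gap W hW hk1 hlow hhigh hw
    · -- c = b : w = blockStart k + k + 1
      have hlow : blockStart k + k < w := by rw [hw']; linarith
      have hhigh : w < blockStart (k + 1) := by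
        rw [hw', hrec]
        have : (0:ℤ) < 2 ^ (k + 1) := by positivity
        linarith
      exact not_mem_gap W hW hk1 hlow hhigh hw
  have hinj : Function.Injective f := by
    have hm : StrictMono f := by
      apply strictMono_nat_of_lt_succ
      intro i
      have hrec := bs_rec (K + i)
      have hp : (0:ℤ) < 2 ^ (K + i + 1) := by positivity
      simp only [hf]
      have : K + (i + 1) = (K + i) + 1 := by omega
      rw [this, hrec]
      push_cast
      linarith
    exact hm.injective
  have : (Set.range f).Finite := hfin.subset (by
    rintro x ⟨i, rfl⟩
    exact hfmem i)
  exact (Set.infinite_range_of_injective hinj) this
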